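/- Let (Ω, 𝔉, μ) be a measure space and let F : L²(μ) → ℝ be defined by F(v) = (1/2)·∫ (max(v(x), 0))² dμ(x). Then for every v ∈ L²(μ), F is Fréchet differentiable at v with derivative the continuous linear functional w ↦ ∫ max(v(x), 0)·w(x) dμ(x). -/

import Mathlib

open MeasureTheory

private lemma ptwise (a b : ℝ) :
    |(1/2) * (max (a + b) 0)^2 - (1/2) * (max a 0)^2 - max a 0 * b| ≤ (3/2) * b^2 := by
  rcases le_or_gt (a + b) 0 with h1 | h1 <;> rcases le_or_gt a 0 with h2 | h2 <;>
      rw [abs_le] <;> constructor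
  · rw [max_eq_right h1, max_eq_right h2]; nlinarith [sq_nonneg b]
  · rw [max_eq_right h1, max_eq_right h2]; nlinarith [sq_nonneg b]
  · rw [max_eq_right h1, max_eq_left h2.le]; nlinarith [sq_nonneg (a+b), sq_nonneg b]
  · rw [max_eq_right h1, max_eq_left h2.le];
    nlinarith [sq_nonneg (a+b), sq_nonneg b, mul_nonneg h2.le (neg_nonneg.2 h1)]
  · rw [max_eq_left h1.le, max_eq_right h2];
    nlinarith [sq_nonneg (a+b), sq_nonneg b, mul_nonneg h1.le (neg_nonneg.2 h2)]
  · rw [max_eq_left h1.le, max_eq_right h2];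
    nlinarith [sq_nonneg (a+b), sq_nonneg b, mul_nonneg h1.le (neg_nonneg.2 h2)]
  · rw [max_eq_left h1.le, max_eq_left h2.le]; nlinarith [sq_nonneg b]
  · rw [max_eq_left h1.le, max_eq_left h2.le]; nlinarith [sq_nonneg b]

private lemma memLp_add {Ω : Type*} [MeasurableSpace Ω] {μ : Measure Ω}
    (f g : Lp ℝ 2 μ) : MemLp (fun x => f x + g x) 2 μ :=
  (Lp.memLp f).add (Lp.memLp g)

private lemma int_mul {Ω : Type*} [MeasurableSpace Ω] {μ : Measure Ω}
    (f g : Lp ℝ 2 μ) : Integrable (fun x => max (f x) 0 * g x) μ := by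
  have h := L2.integrable_inner (𝕜 := ℝ) (Lp.posPart f) g
  simp only [RCLike.inner_apply, conj_trivial] at h
  exact h.congr ((Lp.coeFn_posPart f).mono fun x hx => by
    simp only [hx, mul_comm])

private lemma inner_eq {Ω : Type*} [MeasurableSpace Ω] {μ : Measure Ω}
    (f g : Lp ℝ 2 μ) : (inner ℝ (Lp.posPart f) g : ℝ) = ∫ x, max (f x) 0 * g x ∂μ := by
  rw [L2.inner_def]
  refine integral_congr_ae (((Lp.coeFn_posPart f)).mono fun x hx => ?_)
  simp [RCLike.inner_apply, hx, mul_comm]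

private lemma key_bound {Ω : Type*} [MeasurableSpace Ω] {μ : Measure Ω}
    (f g : Lp ℝ 2 μ) :
    |(1/2) * (∫ x, (max (f x + g x) 0)^2 ∂μ) - (1/2) * (∫ x, (max (f x) 0)^2 ∂μ)
      - ∫ x, max (f x) 0 * g x ∂μ| ≤ (3/2) * ‖g‖^2 := by
  have hsq1 : Integrable (fun x => (max (f x + g x) 0)^2) μ :=
    (memLp_add f g).pos_part.integrable_sq
  have hsq2 : Integrable (fun x => (max (f x) 0)^2) μ :=
    (Lp.memLp f).pos_part.integrable_sq
  have hmul := int_mul f g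
  have hgsq : Integrable (fun x => (g x)^2) μ := (Lp.memLp g).integrable_sq
  have hnorm : ∫ x, (g x)^2 ∂μ = ‖g‖^2 := by
    rw [← real_inner_self_eq_norm_sq g, L2.inner_def]
    refine integral_congr_ae (Filter.Eventually.of_forall fun x => ?_)
    simp [RCLike.inner_apply, sq]
  have hcomb : (1/2) * (∫ x, (max (f x + g x) 0)^2 ∂μ)
      - (1/2) * (∫ x, (max (f x) 0)^2 ∂μ) - ∫ x, max (f x) 0 * g x ∂μ
      = ∫ x, ((1/2) * (max (f x + g x) 0)^2 - (1/2) * (max (f x) 0)^2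
          - max (f x) 0 * g x) ∂μ := by
    have hI : Integrable (fun x => (1/2) * (max (f x + g x) 0)^2
        - (1/2) * (max (f x) 0)^2) μ := (hsq1.const_mul _).sub (hsq2.const_mul _)
    rw [integral_sub hI hmul, integral_sub (hsq1.const_mul _) (hsq2.const_mul _),
      integral_const_mul, integral_const_mul]
  rw [hcomb, ← hnorm, ← integral_const_mul]
  calc |∫ x, ((1/2) * (max (f x + g x) 0)^2 - (1/2) * (max (f x) 0)^2
          - max (f x) 0 * g x) ∂μ|
      ≤ ∫ x, |(1/2) * (max (f x + g x) 0)^2 - (1/2) * (max (f x) 0)^2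
          - max (f x) 0 * g x| ∂μ := by
        exact abs_integral_le_integral_abs
    _ ≤ ∫ x, (3/2) * (g x)^2 ∂μ := by
        refine integral_mono (((hsq1.const_mul _).sub (hsq2.const_mul _)).sub hmul).abs
          (hgsq.const_mul _) fun x => ptwise (f x) (g x)

theorem penalty_functional_frechet_diff
    {Ω : Type*} [MeasurableSpace Ω] (μ : Measure Ω)
    (F : Lp ℝ 2 μ → ℝ)
    (hF : ∀ v : Lp ℝ 2 μ, F v = (1 / 2) * ∫ x, (max (v x) 0) ^ 2 ∂μ) :
    ∀ v : Lp ℝ 2 μ, ∃ L : Lp ℝ 2 μ →L[ℝ] ℝ,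
      HasFDerivAt F L v ∧ ∀ w : Lp ℝ 2 μ, L w = ∫ x, max (v x) 0 * w x ∂μ := by
  intro v
  refine ⟨innerSL ℝ (Lp.posPart v), ?_, fun w => inner_eq v w⟩
  rw [hasFDerivAt_iff_isLittleO_nhds_zero, Asymptotics.isLittleO_iff]
  intro c hc
  have hball : Metric.ball (0 : Lp ℝ 2 μ) (2 * c / 3) ∈ nhds (0 : Lp ℝ 2 μ) :=
    Metric.ball_mem_nhds _ (by positivity)
  filter_upwards [hball] with g hg
  have hgnorm : ‖g‖ < 2 * c / 3 := by
    simpa [Metric.mem_ball, dist_zero_right] using hg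
  have hkey := key_bound v g
  have hadd : ∫ x, (max ((v + g) x) 0)^2 ∂μ = ∫ x, (max (v x + g x) 0)^2 ∂μ :=
    integral_congr_ae ((Lp.coeFn_add v g).mono fun x hx => by simp only [hx, Pi.add_apply])
  have hL : (innerSL ℝ (Lp.posPart v)) g = ∫ x, max (v x) 0 * g x ∂μ := inner_eq v g
  rw [Real.norm_eq_abs, hF, hF, hadd, hL]
  calc |(1/2) * (∫ x, (max (v x + g x) 0)^2 ∂μ) - (1/2) * (∫ x, (max (v x) 0)^2 ∂μ)
        - ∫ x, max (v x) 0 * g x ∂μ| ≤ (3/2) * ‖g‖^2 := hkey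
    _ ≤ c * ‖g‖ := by nlinarith [norm_nonneg g]
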